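/- The series ∑_{n=1}^∞ 3/(n²·C(2n,n)) and ∑_{n=1}^∞ 1/n² have the same limit. -/

import Mathlib

open MeasureTheory Real Set

lemma beta_nat (a b : ℕ) :
    ∫ x in (0:ℝ)..1, x ^ a * (1 - x) ^ b
      = (a.factorial * b.factorial : ℝ) / (a + b + 1).factorial := by
  induction b generalizing a with
  | zero =>
    simp only [pow_zero, mul_one, integral_pow, one_pow, Nat.factorial_zero, Nat.cast_one,
      add_zero]
    rw [zero_pow (by omega), sub_zero]
    rw [Nat.factorial_succ]
    push_cast
    rw [one_div, eq_div_iff (by positivity)]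
    field_simp
  | succ b ih =>
    have key : ∫ x in (0:ℝ)..1,
        ((a+1:ℝ) * (x ^ a * (1 - x) ^ (b+1)) - (b+1:ℝ) * (x ^ (a+1) * (1 - x) ^ b)) = 0 := by
      have hd : ∀ x ∈ Set.uIcc (0:ℝ) 1,
          HasDerivAt (fun x : ℝ => x ^ (a+1) * (1 - x) ^ (b+1))
            ((a+1:ℝ) * (x ^ a * (1 - x) ^ (b+1)) - (b+1:ℝ) * (x ^ (a+1) * (1 - x) ^ b)) x := by
        intro x _
        have h1 : HasDerivAt (fun x : ℝ => x ^ (a+1)) ((a+1:ℝ) * x ^ a) x := by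
          simpa using hasDerivAt_pow (a+1) x
        have h2 : HasDerivAt (fun x : ℝ => (1 - x) ^ (b+1)) (-((b+1:ℝ) * (1 - x) ^ b)) x := by
          have := ((hasDerivAt_pow (b+1) (1 - x)).comp x
            ((hasDerivAt_id x).const_sub 1))
          simpa [Function.comp_def] using this
        have := h1.fun_mul h2
        refine this.congr_deriv ?_
        push_cast
        ring
      have hint : IntervalIntegrable (fun x : ℝ =>
          (a+1:ℝ) * (x ^ a * (1 - x) ^ (b+1)) - (b+1:ℝ) * (x ^ (a+1) * (1 - x) ^ b))
          volume 0 1 := (by continuity : Continuous fun x : ℝ =>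
          (a+1:ℝ) * (x ^ a * (1 - x) ^ (b+1)) - (b+1:ℝ) * (x ^ (a+1) * (1 - x) ^ b)).intervalIntegrable 0 1
      rw [intervalIntegral.integral_eq_sub_of_hasDerivAt hd hint]
      simp
    rw [intervalIntegral.integral_sub ((by continuity : Continuous fun x : ℝ =>
          (a+1:ℝ) * (x ^ a * (1 - x) ^ (b+1))).intervalIntegrable 0 1)
        ((by continuity : Continuous fun x : ℝ =>
          (b+1:ℝ) * (x ^ (a+1) * (1 - x) ^ b)).intervalIntegrable 0 1),
      intervalIntegral.integral_const_mul, intervalIntegral.integral_const_mul,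
      sub_eq_zero, ih (a+1)] at key
    have ha : (a:ℝ) + 1 ≠ 0 := by positivity
    have hF : ((a + 1 + b + 1).factorial : ℝ) ≠ 0 := by positivity
    have harr : (a + (b+1) + 1) = (a + 1 + b + 1) := by omega
    rw [harr, Nat.factorial_succ b, eq_div_iff hF]
    rw [Nat.factorial_succ a] at key
    field_simp at key
    apply mul_left_cancel₀ ha
    push_cast at key ⊢
    nlinarith [key]
-- summability of 1/(n+1)^2
lemma sum_inv_sq : Summable (fun n : ℕ => (1:ℝ) / (n + 1) ^ 2) := by
  have := Real.summable_one_div_nat_pow.mpr (le_refl 2)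
  have h2 := (summable_nat_add_iff 1).mpr this
  refine h2.congr fun n => ?_
  push_cast
  ring

-- choose ≥ 1
lemma choose_pos_real (n : ℕ) : (1:ℝ) ≤ ((2 * (n+1)).choose (n+1) : ℝ) := by
  have : 1 ≤ (2 * (n+1)).choose (n+1) := Nat.choose_pos (by omega)
  exact_mod_cast this

lemma Sn_le (n : ℕ) : (1:ℝ) / ((n + 1) ^ 2 * ((2 * (n+1)).choose (n+1))) ≤ 1 / (n+1)^2 := by
  have h1 : (0:ℝ) < ((n:ℝ) + 1) ^ 2 := by positivity
  have h2 := choose_pos_real n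
  rw [div_le_div_iff₀ (by nlinarith) (by positivity)]
  nlinarith

lemma Sn_summable : Summable (fun n : ℕ => (1:ℝ) / ((n + 1) ^ 2 * ((2 * (n+1)).choose (n+1)))) := by
  refine Summable.of_nonneg_of_le (fun n => by positivity) (fun n => Sn_le n) sum_inv_sq

-- the integral of f n over Ioo 0 1
lemma integral_fn (n : ℕ) :
    ∫ x in Ioo (0:ℝ) 1, x ^ n * (1 - x) ^ (n+1) / (n+1)
      = 1 / ((n + 1) ^ 2 * ((2 * (n+1)).choose (n+1))) := by
  have hb := beta_nat n (n+1)
  rw [← integral_Ioc_eq_integral_Ioo, ← intervalIntegral.integral_of_le (zero_le_one : (0:ℝ) ≤ 1),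
    intervalIntegral.integral_div, hb]
  have hc : ((2*(n+1)).choose (n+1) : ℝ) * ((n+1).factorial : ℝ) * ((n+1).factorial : ℝ)
      = ((2*(n+1)).factorial : ℝ) := by
    have h0 := Nat.choose_mul_factorial_mul_factorial (by omega : (n+1) ≤ 2*(n+1))
    rw [(by omega : 2*(n+1) - (n+1) = n+1)] at h0
    exact_mod_cast congrArg (Nat.cast : ℕ → ℝ) h0
  have harr : (n + (n+1) + 1) = 2*(n+1) := by omega
  rw [harr]
  have h1 : ((n+1).factorial : ℝ) = ((n:ℝ)+1) * (n.factorial : ℝ) := by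
    rw [Nat.factorial_succ]; push_cast; ring
  have hfn : (0:ℝ) < (n.factorial : ℝ) := by positivity
  have hf2 : (0:ℝ) < ((2*(n+1)).factorial : ℝ) := by positivity
  have hch : (0:ℝ) < ((2*(n+1)).choose (n+1) : ℝ) := by
    have := choose_pos_real n; linarith
  rw [div_div, div_eq_div_iff (by positivity) (by positivity)]
  rw [h1] at hc
  nlinarith [hc]

-- integral of g k
lemma integral_gk (k : ℕ) :
    ∫ x in Ioo (0:ℝ) 1, (-1:ℝ) ^ k * (x ^ k - x ^ (3*k+2)) / (k+1)
      = (-1:ℝ) ^ k * (2/3) / (k+1) ^ 2 := by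
  rw [← integral_Ioc_eq_integral_Ioo, ← intervalIntegral.integral_of_le (zero_le_one : (0:ℝ) ≤ 1)]
  have : ∀ x : ℝ, (-1:ℝ) ^ k * (x ^ k - x ^ (3*k+2)) / (k+1)
      = ((-1:ℝ)^k / (k+1)) * (x ^ k - x ^ (3*k+2)) := by intro x; ring
  simp_rw [this]
  rw [intervalIntegral.integral_const_mul,
    intervalIntegral.integral_sub ((by continuity : Continuous fun x:ℝ => x ^ k).intervalIntegrable 0 1)
      ((by continuity : Continuous fun x:ℝ => x ^ (3*k+2)).intervalIntegrable 0 1),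
    integral_pow, integral_pow]
  have h1 : (k:ℝ) + 1 ≠ 0 := by positivity
  have h2 : (3*k+2 : ℝ) + 1 ≠ 0 := by positivity
  rw [one_pow, one_pow, zero_pow (by omega), zero_pow (by omega)]
  push_cast
  field_simp
  ring

lemma log_eq (x : ℝ) (hx : x ∈ Ioo (0:ℝ) 1) :
    -Real.log (1 - x*(1-x)) = Real.log (1+x) - Real.log (1+x^3) := by
  obtain ⟨h0, h1⟩ := hx
  have hx1 : (0:ℝ) < 1 + x := by linarith
  have hx3 : (0:ℝ) < 1 + x^3 := by positivity
  have key : 1 - x*(1-x) = (1+x^3)/(1+x) := by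
    field_simp
    ring
  rw [key, Real.log_div (by positivity) (by positivity)]
  ring

lemma hasSum_f (x : ℝ) (hx : x ∈ Ioo (0:ℝ) 1) :
    HasSum (fun n : ℕ => x ^ n * (1 - x) ^ (n+1) / (n+1))
      ((Real.log (1+x) - Real.log (1+x^3)) / x) := by
  obtain ⟨h0, h1⟩ := hx
  have habs : |x*(1-x)| < 1 := by
    rw [abs_of_nonneg (by nlinarith)]
    nlinarith
  have H := Real.hasSum_pow_div_log_of_abs_lt_one habs
  have H2 := H.div_const x
  rw [← log_eq x ⟨h0, h1⟩]
  refine H2.congr_fun fun n => ?_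
  rw [mul_pow]
  field_simp
  ring
lemma hasSum_g (x : ℝ) (hx : x ∈ Ioo (0:ℝ) 1) :
    HasSum (fun k : ℕ => (-1:ℝ) ^ k * (x ^ k - x ^ (3*k+2)) / (k+1))
      ((Real.log (1+x) - Real.log (1+x^3)) / x) := by
  obtain ⟨h0, h1⟩ := hx
  have hax : |(-x)| < 1 := by rw [abs_neg, abs_of_pos h0]; exact h1
  have hax3 : |(-x^3)| < 1 := by
    rw [abs_neg, abs_of_pos (by positivity)]
    exact pow_lt_one₀ h0.le h1 (by norm_num)
  have H1 := (Real.hasSum_pow_div_log_of_abs_lt_one hax).neg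
  have H3 := (Real.hasSum_pow_div_log_of_abs_lt_one hax3).neg
  rw [sub_neg_eq_add, neg_neg] at H1 H3
  have H := (H1.sub H3).div_const x
  refine H.congr_fun fun k => ?_
  have e1 : (-x:ℝ) ^ (k+1) = (-1)^(k+1) * x^(k+1) := by rw [neg_pow]
  have e3 : (-x^3:ℝ) ^ (k+1) = (-1)^(k+1) * x^(3*k+3) := by rw [neg_pow]; ring_nf
  rw [e1, e3, pow_succ (-1:ℝ) k]
  field_simp
  ring

noncomputable def L (x : ℝ) : ℝ := (Real.log (1+x) - Real.log (1+x^3)) / x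

lemma intf (n : ℕ) : IntegrableOn (fun x : ℝ => x ^ n * (1 - x) ^ (n+1) / (n+1)) (Ioo 0 1) volume :=
  ((by continuity : Continuous fun x : ℝ => x ^ n * (1 - x) ^ (n+1) / (n+1)).integrableOn_Icc
    (a := 0) (b := 1)).mono_set Ioo_subset_Icc_self

lemma intg (k : ℕ) : IntegrableOn (fun x : ℝ => (-1:ℝ) ^ k * (x ^ k - x ^ (3*k+2)) / (k+1)) (Ioo 0 1) volume :=
  ((by continuity : Continuous fun x : ℝ => (-1:ℝ) ^ k * (x ^ k - x ^ (3*k+2)) / (k+1)).integrableOn_Icc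
    (a := 0) (b := 1)).mono_set Ioo_subset_Icc_self

lemma S_eq_int :
    ∑' n : ℕ, (1:ℝ) / ((n + 1) ^ 2 * ((2 * (n+1)).choose (n+1)))
      = ∫ x in Ioo (0:ℝ) 1, L x := by
  have norm_eq : ∀ n : ℕ, (∫ x in Ioo (0:ℝ) 1, ‖x ^ n * (1 - x) ^ (n+1) / (n+1)‖)
      = ∫ x in Ioo (0:ℝ) 1, x ^ n * (1 - x) ^ (n+1) / (n+1) := by
    intro n
    refine setIntegral_congr_fun measurableSet_Ioo fun x hx => ?_
    obtain ⟨h0, h1⟩ := hx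
    have hx' : (0:ℝ) ≤ 1 - x := by linarith
    exact Real.norm_of_nonneg (div_nonneg (mul_nonneg (pow_nonneg h0.le n)
      (pow_nonneg hx' _)) (by positivity))
  have swap := MeasureTheory.integral_tsum_of_summable_integral_norm
    (μ := volume.restrict (Ioo (0:ℝ) 1))
    (F := fun (n : ℕ) (x : ℝ) => x ^ n * (1 - x) ^ (n+1) / (n+1))
    (fun n => intf n) ?_
  · calc ∑' n : ℕ, (1:ℝ) / ((n + 1) ^ 2 * ((2 * (n+1)).choose (n+1)))
        = ∑' n : ℕ, ∫ x in Ioo (0:ℝ) 1, x ^ n * (1 - x) ^ (n+1) / (n+1) :=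
          (tsum_congr fun n => (integral_fn n).symm)
      _ = ∫ x in Ioo (0:ℝ) 1, ∑' n : ℕ, x ^ n * (1 - x) ^ (n+1) / (n+1) := swap
      _ = ∫ x in Ioo (0:ℝ) 1, L x := by
          refine setIntegral_congr_fun measurableSet_Ioo fun x hx => ?_
          exact (hasSum_f x hx).tsum_eq
  · refine Summable.congr (Sn_summable) fun n => ?_
    rw [norm_eq n, integral_fn n]



lemma gnorm (k : ℕ) (x : ℝ) (hx : x ∈ Ioo (0:ℝ) 1) :
    ‖(-1:ℝ) ^ k * (x ^ k - x ^ (3*k+2)) / (k+1)‖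
      = (-1:ℝ) ^ k * ((-1:ℝ) ^ k * (x ^ k - x ^ (3*k+2)) / (k+1)) := by
  obtain ⟨h0, h1⟩ := hx
  have hge : x ^ (3*k+2) ≤ x ^ k := pow_le_pow_of_le_one h0.le h1.le (by omega)
  have e : (-1:ℝ) ^ k * ((-1:ℝ) ^ k * (x ^ k - x ^ (3*k+2)) / (k+1))
      = (x ^ k - x ^ (3*k+2)) / (k+1) := by
    rw [← mul_div_assoc, ← mul_assoc, ← pow_add, ← two_mul, pow_mul]
    norm_num
  rw [e, Real.norm_eq_abs, abs_div, abs_mul, abs_pow, abs_neg, abs_one, one_pow, one_mul,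
    abs_of_nonneg (by linarith), abs_of_nonneg (by positivity)]

lemma int_L_eq :
    (∫ x in Ioo (0:ℝ) 1, L x) = (2/3) * ∑' k : ℕ, (-1:ℝ) ^ k / (k+1) ^ 2 := by
  have norm_int : ∀ k : ℕ, (∫ x in Ioo (0:ℝ) 1, ‖(-1:ℝ) ^ k * (x ^ k - x ^ (3*k+2)) / (k+1)‖)
      = (2/3) / ((k:ℝ)+1) ^ 2 := by
    intro k
    rw [setIntegral_congr_fun measurableSet_Ioo (fun x hx => gnorm k x hx),
      integral_const_mul, integral_gk]
    rw [← mul_div_assoc, ← mul_assoc, ← pow_add, ← two_mul, pow_mul]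
    norm_num
  have swap := MeasureTheory.integral_tsum_of_summable_integral_norm
    (μ := volume.restrict (Ioo (0:ℝ) 1))
    (F := fun (k : ℕ) (x : ℝ) => (-1:ℝ) ^ k * (x ^ k - x ^ (3*k+2)) / (k+1))
    (fun k => intg k) ?_
  · calc (∫ x in Ioo (0:ℝ) 1, L x)
        = ∫ x in Ioo (0:ℝ) 1, ∑' k : ℕ, (-1:ℝ) ^ k * (x ^ k - x ^ (3*k+2)) / (k+1) := by
          refine setIntegral_congr_fun measurableSet_Ioo fun x hx => ?_
          exact ((hasSum_g x hx).tsum_eq).symm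
      _ = ∑' k : ℕ, ∫ x in Ioo (0:ℝ) 1, (-1:ℝ) ^ k * (x ^ k - x ^ (3*k+2)) / (k+1) := swap.symm
      _ = ∑' k : ℕ, (2/3) * ((-1:ℝ) ^ k / (k+1) ^ 2) := by
          refine tsum_congr fun k => ?_
          rw [integral_gk]
          ring
      _ = (2/3) * ∑' k : ℕ, (-1:ℝ) ^ k / (k+1) ^ 2 := tsum_mul_left
  · have h1 : Summable (fun k : ℕ => (2:ℝ)/3 / ((k:ℝ)+1) ^ 2) := by
      refine (sum_inv_sq.mul_left (2/3)).congr fun k => ?_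
      rw [← mul_div_assoc, mul_one]
    exact h1.congr fun k => (norm_int k).symm

lemma E_summable : Summable (fun k : ℕ => (-1:ℝ) ^ k / (k + 1) ^ 2) := by
  refine Summable.of_norm ?_
  refine sum_inv_sq.congr fun k => ?_
  rw [Real.norm_eq_abs, abs_div, abs_pow, abs_neg, abs_one, one_pow,
    abs_of_nonneg (by positivity)]

lemma Z_eq_2E :
    ∑' n : ℕ, (1:ℝ) / (n + 1) ^ 2 = 2 * ∑' k : ℕ, (-1:ℝ) ^ k / (k + 1) ^ 2 := by
  set Z := ∑' n : ℕ, (1:ℝ) / (n + 1) ^ 2 with hZ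
  set E := ∑' k : ℕ, (-1:ℝ) ^ k / (k + 1) ^ 2 with hE
  have hd : ∀ n : ℕ, (1:ℝ) / (n + 1) ^ 2 - (-1:ℝ) ^ n / (n + 1) ^ 2
      = (1 - (-1:ℝ) ^ n) / (n + 1) ^ 2 := fun n => by ring
  have hsub : ∑' n : ℕ, ((1:ℝ) / (n + 1) ^ 2 - (-1:ℝ) ^ n / (n + 1) ^ 2) = Z - E :=
    Summable.tsum_sub sum_inv_sq E_summable
  have heven : ∀ k : ℕ, ((1:ℝ) / ((2*k:ℕ) + 1) ^ 2 - (-1:ℝ) ^ (2*k:ℕ) / ((2*k:ℕ) + 1) ^ 2) = 0 := by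
    intro k
    rw [pow_mul]
    norm_num
  have hodd : ∀ k : ℕ, ((1:ℝ) / ((2*k+1:ℕ) + 1) ^ 2 - (-1:ℝ) ^ (2*k+1:ℕ) / ((2*k+1:ℕ) + 1) ^ 2)
      = (1/2) * (1 / ((k:ℝ) + 1) ^ 2) := by
    intro k
    have hs : (-1:ℝ) ^ (2*k+1) = -1 := by rw [pow_succ, pow_mul]; norm_num
    rw [hs]
    push_cast
    have h0 : ((k:ℝ) + 1) ≠ 0 := by positivity
    field_simp
    ring
  have hsum_odd : Summable (fun k : ℕ => ((1:ℝ) / ((2*k+1:ℕ) + 1) ^ 2 - (-1:ℝ) ^ (2*k+1:ℕ) / ((2*k+1:ℕ) + 1) ^ 2)) := by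
    refine (sum_inv_sq.mul_left (1/2)).congr fun k => ?_
    exact (hodd k).symm
  have hsum_even : Summable (fun k : ℕ => ((1:ℝ) / ((2*k:ℕ) + 1) ^ 2 - (-1:ℝ) ^ (2*k:ℕ) / ((2*k:ℕ) + 1) ^ 2)) := by
    refine summable_zero.congr fun k => ?_
    exact (heven k).symm
  have hEO := tsum_even_add_odd (f := fun n : ℕ => (1:ℝ) / (n + 1) ^ 2 - (-1:ℝ) ^ n / (n + 1) ^ 2)
    hsum_even hsum_odd
  rw [hsub] at hEO
  have h1 : ∑' (k : ℕ), ((1:ℝ) / ((2*k:ℕ) + 1) ^ 2 - (-1:ℝ) ^ (2*k:ℕ) / ((2*k:ℕ) + 1) ^ 2) = 0 := by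
    rw [tsum_congr heven]; exact tsum_zero
  have h2 : ∑' (k : ℕ), ((1:ℝ) / ((2*k+1:ℕ) + 1) ^ 2 - (-1:ℝ) ^ (2*k+1:ℕ) / ((2*k+1:ℕ) + 1) ^ 2)
      = (1/2) * Z := by
    rw [tsum_congr hodd, tsum_mul_left]
  rw [h1, h2, zero_add] at hEO
  linarith [hEO]

theorem stmt8 :
    ∑' n : ℕ, (3 : ℝ) / ((n + 1) ^ 2 * Nat.choose (2 * (n + 1)) (n + 1)) =
      ∑' n : ℕ, (1 : ℝ) / (n + 1) ^ 2 := by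
  have hterm : ∀ n : ℕ, (3 : ℝ) / ((n + 1) ^ 2 * Nat.choose (2 * (n + 1)) (n + 1))
      = 3 * ((1:ℝ) / ((n + 1) ^ 2 * ((2 * (n+1)).choose (n+1)))) := by
    intro n
    rw [mul_one_div]
  rw [tsum_congr hterm, tsum_mul_left, S_eq_int, int_L_eq, Z_eq_2E]
  ring
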